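/- With the Moyal star product f ⋆ g = Σ_{k≥0} (1/(2i))^k (1/k!) P^k(f,g) on functions on ℝ², for A, B ∈ sl(2,ℝ) and their associated functions Ã, B̃ (affine in p), one has (iÃ) ⋆ (iB̃) - (iB̃) ⋆ (iÃ) = i·\widetilde{[A,B]}. -/

import Mathlib

open Real Complex

/-- Partial derivative in the direction of coordinate `i` (0 = p, 1 = q) on `ℝ × ℝ`,
for complex-valued functions. -/
noncomputable def pderiv2C (i : Fin 2) (f : ℝ × ℝ → ℂ) : ℝ × ℝ → ℂ :=
  if i = 0 then fun x => deriv (fun p => f (p, x.2)) x.1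
  else fun x => deriv (fun q => f (x.1, q)) x.2

/-- Iterated partial derivatives along a list of coordinate directions. -/
noncomputable def pderivsC (l : List (Fin 2)) (f : ℝ × ℝ → ℂ) : ℝ × ℝ → ℂ :=
  l.foldr pderiv2C f

/-- The standard symplectic matrix `Λ` on `ℝ²`: `Λ¹² = 1`, `Λ²¹ = -1`. -/
def sympΛC (i j : Fin 2) : ℂ :=
  if i = 0 ∧ j = 1 then 1 else if i = 1 ∧ j = 0 then -1 else 0

/-- The `k`-th Moyal bidifferential operator. -/
noncomputable def moyalPC (k : ℕ) (f g : ℝ × ℝ → ℂ) : ℝ × ℝ → ℂ := fun x =>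
  ∑ i : Fin k → Fin 2, ∑ j : Fin k → Fin 2,
    (∏ l : Fin k, sympΛC (i l) (j l)) *
      (pderivsC (List.ofFn i) f x * pderivsC (List.ofFn j) g x)

/-- The Moyal star product `f ⋆ g = Σ_{k≥0} (1/(2i))^k (1/k!) P^k(f,g)`. -/
noncomputable def moyalStar (f g : ℝ × ℝ → ℂ) : ℝ × ℝ → ℂ := fun x =>
  ∑' k : ℕ, (1 / (2 * Complex.I)) ^ k * (1 / (Nat.factorial k) : ℂ) * moyalPC k f g x

/-- The complex-valued Hamiltonian function associated to `A = a₁X + b₁H + c₁Y`. -/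
noncomputable def tildeFunC (lam a₁ b₁ c₁ : ℝ) : ℝ × ℝ → ℂ := fun x =>
  ((2 * a₁ * (x.1 * Real.cos x.2 - lam * Real.sin x.2) +
      2 * b₁ * (x.1 * Real.sin x.2 + lam * Real.cos x.2) - 2 * c₁ * x.1 : ℝ) : ℂ)

/- ### auxiliary -/

def IsAff (f : ℝ × ℝ → ℂ) : Prop :=
  ∃ u v : ℝ → ℂ, ContDiff ℝ (⊤:ℕ∞) u ∧ ContDiff ℝ (⊤:ℕ∞) v ∧
    f = fun x => u x.2 * x.1 + v x.2

def IsCst (f : ℝ × ℝ → ℂ) : Prop :=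
  ∃ u : ℝ → ℂ, ContDiff ℝ (⊤:ℕ∞) u ∧ f = fun x => u x.2

lemma pd0_aff (u v : ℝ → ℂ) :
    pderiv2C 0 (fun x => u x.2 * x.1 + v x.2) = fun x => u x.2 := by
  funext x
  simp only [pderiv2C, if_pos rfl]
  have h : HasDerivAt (fun p : ℝ => u x.2 * (p:ℂ) + v x.2) (u x.2) x.1 := by
    have h1 : HasDerivAt (fun p : ℝ => ((p:ℝ):ℂ)) 1 x.1 := by
      simpa using (hasDerivAt_id x.1).ofReal_comp
    simpa using (h1.const_mul (u x.2)).add_const (v x.2)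
  exact h.deriv

lemma pd1_aff (u v : ℝ → ℂ) (hu : Differentiable ℝ u) (hv : Differentiable ℝ v) :
    pderiv2C 1 (fun x => u x.2 * x.1 + v x.2)
      = fun x => deriv u x.2 * x.1 + deriv v x.2 := by
  funext x
  simp only [pderiv2C, if_neg (by decide : (1:Fin 2) ≠ 0)]
  exact (((hu x.2).hasDerivAt.mul_const (x.1:ℂ)).add (hv x.2).hasDerivAt).deriv

lemma pd0_cst (u : ℝ → ℂ) :
    pderiv2C 0 (fun x : ℝ × ℝ => u x.2) = fun _ => 0 := by
  funext x
  simp only [pderiv2C, if_pos rfl]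
  simp

lemma pd1_cst (u : ℝ → ℂ) (hu : Differentiable ℝ u) :
    pderiv2C 1 (fun x : ℝ × ℝ => u x.2) = fun x => deriv u x.2 := by
  funext x
  simp only [pderiv2C, if_neg (by decide : (1:Fin 2) ≠ 0)]

lemma pd_zero (i : Fin 2) : pderiv2C i (fun _ => 0) = fun _ => 0 := by
  funext x
  simp only [pderiv2C]
  split <;> exact deriv_const _ _

lemma IsAff.pd0 {f} (h : IsAff f) : IsCst (pderiv2C 0 f) := by
  obtain ⟨u, v, hu, hv, rfl⟩ := h
  exact ⟨u, hu, pd0_aff u v⟩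

lemma IsAff.pd1 {f} (h : IsAff f) : IsAff (pderiv2C 1 f) := by
  obtain ⟨u, v, hu, hv, rfl⟩ := h
  exact ⟨deriv u, deriv v, (contDiff_infty_iff_deriv.1 hu).2,
    (contDiff_infty_iff_deriv.1 hv).2, pd1_aff u v (contDiff_infty_iff_deriv.1 hu).1 (contDiff_infty_iff_deriv.1 hv).1⟩

lemma IsCst.pd0 {f} (h : IsCst f) : pderiv2C 0 f = fun _ => 0 := by
  obtain ⟨u, hu, rfl⟩ := h
  exact pd0_cst u

lemma IsCst.pd1 {f} (h : IsCst f) : IsCst (pderiv2C 1 f) := by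
  obtain ⟨u, hu, rfl⟩ := h
  exact ⟨deriv u, (contDiff_infty_iff_deriv.1 hu).2, pd1_cst u (contDiff_infty_iff_deriv.1 hu).1⟩

lemma pderivs_cases {f} (hf : IsAff f) (l : List (Fin 2)) :
    (l.count 0 = 0 → IsAff (pderivsC l f)) ∧
    (l.count 0 = 1 → IsCst (pderivsC l f)) ∧
    (2 ≤ l.count 0 → pderivsC l f = fun _ => 0) := by
  induction l with
  | nil =>
    refine ⟨fun _ => hf, fun h => by simp at h, fun h => by simp at h⟩
  | cons a t ih =>
    have hstep : pderivsC (a :: t) f = pderiv2C a (pderivsC t f) := rfl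
    obtain ⟨ih0, ih1, ih2⟩ := ih
    have ha : a = 0 ∨ a = 1 := by omega
    rcases ha with ha | ha <;> subst ha
    · have hc : (0 :: t : List (Fin 2)).count 0 = t.count 0 + 1 := by
        simp [List.count_cons]
      refine ⟨fun h => by omega, ?_, ?_⟩
      · intro h
        rw [hstep]
        exact (ih0 (by omega)).pd0
      · intro h
        rw [hstep]
        rcases Nat.lt_or_ge (t.count 0) 2 with h2 | h2
        · have : t.count 0 = 1 := by omega
          exact (ih1 this).pd0
        · rw [ih2 h2]; exact pd_zero 0
    · have hc : (1 :: t : List (Fin 2)).count 0 = t.count 0 := by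
        simp [List.count_cons]
      refine ⟨fun h => ?_, fun h => ?_, fun h => ?_⟩
      · rw [hstep]; exact (ih0 (by omega)).pd1
      · rw [hstep]; exact (ih1 (by omega)).pd1
      · rw [hstep, ih2 (by omega)]; exact pd_zero 1

lemma count01 (l : List (Fin 2)) : l.count 0 + l.count 1 = l.length := by
  induction l with
  | nil => simp
  | cons a t ih =>
    have ha : a = 0 ∨ a = 1 := by omega
    rcases ha with ha | ha <;> subst ha <;> simp [List.count_cons] <;> omega

def flipF : Fin 2 → Fin 2 := fun a => if a = 0 then 1 else 0

lemma sympΛC_eq_zero {a b : Fin 2} (h : b ≠ flipF a) : sympΛC a b = 0 := by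
  fin_cases a <;> fin_cases b <;> simp_all [sympΛC, flipF]

lemma count_map_flip (l : List (Fin 2)) : (l.map flipF).count 0 = l.count 1 := by
  have : flipF 1 = 0 := rfl
  rw [← this]
  exact List.count_map_of_injective l flipF (by decide) 1

lemma moyalPC_zero_of_ge {f g} (hf : IsAff f) (hg : IsAff g) {k : ℕ} (hk : 3 ≤ k) :
    moyalPC k f g = fun _ => 0 := by
  funext x
  simp only [moyalPC]
  refine Finset.sum_eq_zero fun i _ => Finset.sum_eq_zero fun j _ => ?_
  by_cases hij : ∀ l, j l = flipF (i l)
  · -- counting argument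
    have hlen : (List.ofFn i).count 0 + (List.ofFn i).count 1 = k := by
      simpa using count01 (List.ofFn i)
    rcases Nat.lt_or_ge ((List.ofFn i).count 0) 2 with h2 | h2
    · -- then count 1 ≥ 2, so g-derivatives vanish
      have hj : List.ofFn j = (List.ofFn i).map flipF := by
        rw [List.map_ofFn]
        exact congrArg List.ofFn (funext hij)
      have : 2 ≤ (List.ofFn j).count 0 := by
        rw [hj, count_map_flip]; omega
      rw [(pderivs_cases hg (List.ofFn j)).2.2 this]
      ring
    · rw [(pderivs_cases hf (List.ofFn i)).2.2 h2]
      ring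
  · push_neg at hij
    obtain ⟨l, hl⟩ := hij
    have : (∏ l : Fin k, sympΛC (i l) (j l)) = 0 :=
      Finset.prod_eq_zero (Finset.mem_univ l) (sympΛC_eq_zero hl)
    rw [this, zero_mul]

lemma sum_fn1 (F : (Fin 1 → Fin 2) → ℂ) :
    ∑ i, F i = F ![0] + F ![1] := by
  rw [← Equiv.sum_comp (Equiv.funUnique (Fin 1) (Fin 2)).symm F, Fin.sum_univ_two]
  congr 1 <;> congr 1 <;> funext l <;> fin_cases l <;> rfl

lemma sum_fn2 (F : (Fin 2 → Fin 2) → ℂ) :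
    ∑ i, F i = F ![0,0] + F ![0,1] + F ![1,0] + F ![1,1] := by
  rw [← Equiv.sum_comp (finTwoArrowEquiv (Fin 2)).symm F, Fintype.sum_prod_type,
    Fin.sum_univ_two, Fin.sum_univ_two, Fin.sum_univ_two]
  have h : ∀ a b : Fin 2, (finTwoArrowEquiv (Fin 2)).symm (a, b) = ![a, b] := by
    intro a b; funext l; fin_cases l <;> rfl
  rw [h, h, h, h]; ring

lemma ofFn1 (a : Fin 2) : List.ofFn ![a] = [a] := by simp
lemma ofFn2 (a b : Fin 2) : List.ofFn ![a, b] = [a, b] := by simp [List.ofFn_succ]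

lemma moyalPC0 (f g : ℝ × ℝ → ℂ) : moyalPC 0 f g = fun x => f x * g x := by
  funext x
  simp [moyalPC, pderivsC, Finset.univ_unique, List.ofFn_zero]

lemma moyalPC1 (f g : ℝ × ℝ → ℂ) :
    moyalPC 1 f g = fun x =>
      pderivsC [0] f x * pderivsC [1] g x - pderivsC [1] f x * pderivsC [0] g x := by
  funext x
  simp only [moyalPC]
  rw [sum_fn1]
  rw [sum_fn1 (fun j => _), sum_fn1 (fun j => _)]
  simp [sympΛC, ofFn1]
  ring

lemma moyalPC2 (f g : ℝ × ℝ → ℂ) :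
    moyalPC 2 f g = fun x =>
      - pderivsC [0,1] f x * pderivsC [1,0] g x
      - pderivsC [1,0] f x * pderivsC [0,1] g x
      + pderivsC [0,0] f x * pderivsC [1,1] g x
      + pderivsC [1,1] f x * pderivsC [0,0] g x := by
  funext x
  simp only [moyalPC]
  rw [sum_fn2]
  rw [sum_fn2 (fun j => _), sum_fn2 (fun j => _), sum_fn2 (fun j => _), sum_fn2 (fun j => _)]
  simp [sympΛC, ofFn2, Fin.prod_univ_two]
  ring

lemma moyalStar_eq {f g : ℝ × ℝ → ℂ} (hf : IsAff f) (hg : IsAff g) :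
    moyalStar f g = fun x =>
      moyalPC 0 f g x + (1 / (2 * Complex.I)) * moyalPC 1 f g x
        + (1 / (2 * Complex.I)) ^ 2 * (1 / 2) * moyalPC 2 f g x := by
  funext x
  have hz : ∀ k ∉ Finset.range 3,
      (1 / (2 * Complex.I)) ^ k * (1 / (Nat.factorial k) : ℂ) * moyalPC k f g x = 0 := by
    intro k hk
    rw [Finset.mem_range, not_lt] at hk
    rw [moyalPC_zero_of_ge hf hg hk]
    ring
  rw [moyalStar, tsum_eq_sum hz]
  rw [Finset.sum_range_succ, Finset.sum_range_succ, Finset.sum_range_one]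
  norm_num [Nat.factorial]

/-- Basic trig-affine complex function. -/
noncomputable def CF (A B C : ℝ) : ℝ → ℂ := fun q =>
  Complex.I * ((A * Real.cos q + B * Real.sin q + C : ℝ) : ℂ)

lemma CF_contDiff (A B C : ℝ) : ContDiff ℝ (⊤:ℕ∞) (CF A B C) := by
  apply ContDiff.mul contDiff_const
  exact Complex.ofRealCLM.contDiff.comp (((contDiff_const.mul Real.contDiff_cos).add (contDiff_const.mul Real.contDiff_sin)).add contDiff_const)

lemma CF_hasDerivAt (A B C : ℝ) (q : ℝ) :
    HasDerivAt (CF A B C) (CF B (-A) 0 q) q := by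
  have hr : HasDerivAt (fun q => A * Real.cos q + B * Real.sin q + C)
      (B * Real.cos q + -A * Real.sin q + 0) q := by
    have := (((Real.hasDerivAt_cos q).const_mul A).add
      ((Real.hasDerivAt_sin q).const_mul B)).add_const C
    rw [show B * Real.cos q + -A * Real.sin q + 0 = A * -Real.sin q + B * Real.cos q by ring]
    exact this
  have h2 := hr.ofReal_comp
  exact h2.const_mul Complex.I

lemma tilde_rep (lam a b c : ℝ) :
    (fun x => Complex.I * tildeFunC lam a b c x)
      = fun x : ℝ × ℝ => CF (2*a) (2*b) (-(2*c)) x.2 * x.1 + CF (2*b*lam) (-(2*a*lam)) 0 x.2 := by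
  funext x
  simp only [tildeFunC, CF]
  push_cast
  ring

lemma tilde_isAff (lam a b c : ℝ) : IsAff (fun x => Complex.I * tildeFunC lam a b c x) := by
  rw [tilde_rep]
  exact ⟨_, _, CF_contDiff _ _ _, CF_contDiff _ _ _, rfl⟩

lemma pd1_aff' (u v u' v' : ℝ → ℂ) (hu : ∀ q, HasDerivAt u (u' q) q)
    (hv : ∀ q, HasDerivAt v (v' q) q) :
    pderiv2C 1 (fun x => u x.2 * x.1 + v x.2) = fun x => u' x.2 * x.1 + v' x.2 := by
  funext x
  simp only [pderiv2C, if_neg (by decide : (1:Fin 2) ≠ 0)]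
  exact (((hu x.2).mul_const (x.1:ℂ)).add (hv x.2)).deriv

lemma pd1_cst' (u u' : ℝ → ℂ) (hu : ∀ q, HasDerivAt u (u' q) q) :
    pderiv2C 1 (fun x : ℝ × ℝ => u x.2) = fun x => u' x.2 := by
  funext x
  simp only [pderiv2C, if_neg (by decide : (1:Fin 2) ≠ 0)]
  exact (hu x.2).deriv

section eval
variable (lam a b c : ℝ)

lemma pder0 : pderivsC [0] (fun x => Complex.I * tildeFunC lam a b c x)
    = fun x => CF (2*a) (2*b) (-(2*c)) x.2 := by
  rw [tilde_rep]
  exact pd0_aff _ _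

lemma pder1 : pderivsC [1] (fun x => Complex.I * tildeFunC lam a b c x)
    = fun x => CF (2*b) (-(2*a)) 0 x.2 * x.1 + CF (-(2*a*lam)) (-(2*b*lam)) 0 x.2 := by
  rw [tilde_rep]
  exact pd1_aff' _ _ _ _ (CF_hasDerivAt _ _ _) (CF_hasDerivAt _ _ _)

lemma pder00 : pderivsC [0,0] (fun x => Complex.I * tildeFunC lam a b c x)
    = fun _ => 0 := by
  show pderiv2C 0 (pderivsC [0] _) = _
  rw [pder0]
  exact pd0_cst _

lemma pder10 : pderivsC [1,0] (fun x => Complex.I * tildeFunC lam a b c x)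
    = fun x => CF (2*b) (-(2*a)) 0 x.2 := by
  show pderiv2C 1 (pderivsC [0] _) = _
  rw [pder0]
  exact pd1_cst' _ _ (CF_hasDerivAt _ _ _)

lemma pder01 : pderivsC [0,1] (fun x => Complex.I * tildeFunC lam a b c x)
    = fun x => CF (2*b) (-(2*a)) 0 x.2 := by
  show pderiv2C 0 (pderivsC [1] _) = _
  rw [pder1]
  exact pd0_aff _ _

end eval


theorem moyal_star_commutator (lam a₁ b₁ c₁ a₂ b₂ c₂ : ℝ) :
    moyalStar (fun x => Complex.I * tildeFunC lam a₁ b₁ c₁ x)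
        (fun x => Complex.I * tildeFunC lam a₂ b₂ c₂ x) -
      moyalStar (fun x => Complex.I * tildeFunC lam a₂ b₂ c₂ x)
        (fun x => Complex.I * tildeFunC lam a₁ b₁ c₁ x) =
    fun x => Complex.I *
      tildeFunC lam (2 * (b₁ * c₂ - b₂ * c₁)) (2 * (c₁ * a₂ - c₂ * a₁))
        (-2 * (a₁ * b₂ - a₂ * b₁)) x := by
  have h12 := moyalStar_eq (tilde_isAff lam a₁ b₁ c₁) (tilde_isAff lam a₂ b₂ c₂)
  have h21 := moyalStar_eq (tilde_isAff lam a₂ b₂ c₂) (tilde_isAff lam a₁ b₁ c₁)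
  funext x
  simp only [Pi.sub_apply, h12, h21, moyalPC0, moyalPC1, moyalPC2,
    pder0, pder1, pder00, pder01, pder10]
  have h2I : (1:ℂ)/(2*Complex.I) = -Complex.I/2 := by
    rw [div_eq_div_iff (by simp [Complex.I_ne_zero]) (by norm_num)]
    linear_combination (2 : ℂ) * Complex.I_sq
  rw [h2I]
  simp only [CF, tildeFunC]
  push_cast
  have hI : Complex.I^2 = -1 := Complex.I_sq
  have hp := Complex.sin_sq_add_cos_sq (x.2 : ℂ)
  set s := Complex.sin (x.2 : ℂ)
  set co := Complex.cos (x.2 : ℂ)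
  set p := (x.1 : ℂ)
  set L := (lam : ℂ)
  linear_combination
    (-Complex.I * ((2*a₁*co + 2*b₁*s - 2*c₁) * ((2*b₂*co - 2*a₂*s) * p + (-(2*a₂*L)*co - 2*b₂*L*s))
      - ((2*b₁*co - 2*a₁*s) * p + (-(2*a₁*L)*co - 2*b₁*L*s)) * (2*a₂*co + 2*b₂*s - 2*c₂))) * hI
    + (4*(a₁*b₂ - a₂*b₁)*p*Complex.I) * hp
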